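/- Under the standing assumptions (A1)–(A4) and (h1)–(h3), take x, y ∈ B(x₀, κ) and 0 ≤ t < v < R. If ‖x − x₀‖ ≤ t and ‖y − x‖ ≤ v − t, then λ‖E_f(x, y)‖ ≤ e_ψ(t, v)·‖y − x‖²/(v − t)² ≤ (1/2)ψ″(v)(v − t)², where E_f(x, y) := f(y) − f(x) − f′(x)(y − x) and e_ψ(t, v) := ψ(v) − ψ(t) − ψ′(t)(v − t). -/

import Mathlib

open Metric Set Filter Topology

/-- General slope monotonicity for convex functions on `ℝ`. -/
private lemma slope_mono_gen {s : Set ℝ} {g : ℝ → ℝ} (hg : ConvexOn ℝ s g)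
    {a b c d : ℝ} (ha : a ∈ s) (hb : b ∈ s) (hc : c ∈ s) (hd : d ∈ s)
    (hab : a ≤ b) (hcd : c ≤ d) (hac : a < c) (hbd : b < d) :
    (g c - g a) / (c - a) ≤ (g d - g b) / (d - b) := by
  have had : a < d := lt_of_le_of_lt hab hbd
  have h1 : (g c - g a) / (c - a) ≤ (g d - g a) / (d - a) :=
    hg.secant_mono ha hc hd hac.ne' had.ne' hcd
  have h2 : (g a - g d) / (a - d) ≤ (g b - g d) / (b - d) :=
    hg.secant_mono hd ha hb had.ne hbd.ne hab
  have e1 : (g a - g d) / (a - d) = (g d - g a) / (d - a) := by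
    rw [← neg_div_neg_eq]; ring_nf
  have e2 : (g b - g d) / (b - d) = (g d - g b) / (d - b) := by
    rw [← neg_div_neg_eq]; ring_nf
  rw [e1, e2] at h2
  exact h1.trans h2

/-- Lemma `pr:taylor`: the linearization error of `f` is majorized by the linearization error of ψ. -/
theorem stmt8
    {X Y : Type*} [NormedAddCommGroup X] [NormedSpace ℝ X] [CompleteSpace X]
    [NormedAddCommGroup Y] [NormedSpace ℝ Y] [CompleteSpace Y]
    (Ω : Set X) (hΩ : IsOpen Ω)
    (f : X → Y) (f' : X → X →L[ℝ] Y) (F : X → Set Y)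
    (hfd : ∀ x ∈ Ω, HasFDerivAt f (f' x) x)
    (hf'c : ContinuousOn f' Ω)
    (hFg : IsClosed {p : X × Y | p.2 ∈ F p.1})
    (x₀ : X) (hx₀ : x₀ ∈ Ω) (R : ℝ) (hR : 0 < R)
    (κ : ℝ) (hκ : κ = sSup {t : ℝ | t ∈ Ico (0:ℝ) R ∧ ball x₀ t ⊆ Ω})
    -- (A1): strong-regularity constants and the single-valued selection `s`
    (x₁ : X) (hx₁ : x₁ ∈ Ω)
    (hx₁sol : -(f x₀ + f' x₀ (x₁ - x₀)) ∈ F x₁)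
    (lam rx1 r0 rx0 : ℝ)
    (hlam : 0 < lam) (hrx1 : 0 < rx1) (hr0 : 0 < r0) (hrx0 : 0 < rx0)
    (hball : ball x₀ rx0 ⊆ Ω)
    (s : X → Y → X)
    (hA1 : ∀ x ∈ ball x₀ rx0,
      lam * ‖f' x - f' x₀‖ < 1 ∧
      (∀ z ∈ ball (0:Y) r0,
        ({y : X | z - (f x + f' x (y - x)) ∈ F y} ∩ ball x₁ rx1) = {s x z}) ∧
      (∀ u ∈ ball (0:Y) r0, ∀ v ∈ ball (0:Y) r0,
        ‖s x u - s x v‖ ≤ lam / (1 - lam * ‖f' x - f' x₀‖) * ‖u - v‖))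
    -- (A2): the majorant function ψ and the majorant condition
    (ψ ψ' ψ'' : ℝ → ℝ)
    (hψ1 : ∀ t ∈ Ico (0:ℝ) R, HasDerivAt ψ (ψ' t) t)
    (hψ2 : ∀ t ∈ Ico (0:ℝ) R, HasDerivAt ψ' (ψ'' t) t)
    (hψ2c : ContinuousOn ψ'' (Ico (0:ℝ) R))
    (hmaj : ∀ x ∈ ball x₀ κ, ∀ y ∈ ball x₀ κ, ‖y - x‖ + ‖x - x₀‖ < R →
      lam * ‖f' y - f' x‖ ≤ ψ' (‖y - x‖ + ‖x - x₀‖) - ψ' ‖x - x₀‖)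
    -- (A3)
    (hA3 : ‖x₁ - x₀‖ ≤ ψ 0)
    -- (h1)-(h3)
    (h1 : 0 < ψ 0) (h1' : ψ' 0 = -1)
    (h2a : ConvexOn ℝ (Ico (0:ℝ) R) ψ')
    (h2b : StrictMonoOn ψ' (Ico (0:ℝ) R))
    (tstar : ℝ)
    (h3 : IsLeast {t ∈ Ico (0:ℝ) R | ψ t = 0} tstar)
    -- (A4)
    (hA4a : tstar ≤ min κ rx0)
    (hA4b : ψ'' tstar / (2 * lam) * ψ 0 ^ 2 < r0)
    :
    ∀ x ∈ ball x₀ κ, ∀ y ∈ ball x₀ κ, ∀ t v : ℝ,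
      0 ≤ t → t < v → v < R → ‖x - x₀‖ ≤ t → ‖y - x‖ ≤ v - t →
      lam * ‖f y - (f x + f' x (y - x))‖ ≤
          (ψ v - (ψ t + ψ' t * (v - t))) * (‖y - x‖ ^ 2 / (v - t) ^ 2) ∧
        (ψ v - (ψ t + ψ' t * (v - t))) * (‖y - x‖ ^ 2 / (v - t) ^ 2) ≤
          1 / 2 * ψ'' v * (v - t) ^ 2 := by
  intro x hx y hy t v ht0 htv hvR hxt hyx
  have hΩκ : ball x₀ κ ⊆ Ω := by
    intro z hz
    have hne : Set.Nonempty {t : ℝ | t ∈ Ico (0:ℝ) R ∧ ball x₀ t ⊆ Ω} :=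
      ⟨0, ⟨le_refl 0, hR⟩, by simp⟩
    have hz' : dist z x₀ < sSup {t : ℝ | t ∈ Ico (0:ℝ) R ∧ ball x₀ t ⊆ Ω} := by
      rw [← hκ]; exact mem_ball.mp hz
    obtain ⟨u, hu, hzu⟩ := exists_lt_of_lt_csSup hne hz'
    exact hu.2 (mem_ball.mpr hzu)
  have hd : 0 < v - t := sub_pos.mpr htv
  set ρ := ‖y - x‖ with hρdef
  set b := ‖x - x₀‖ with hbdef
  have hρ0 : 0 ≤ ρ := norm_nonneg _
  have hb0 : 0 ≤ b := norm_nonneg _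
  have htR : t < R := htv.trans hvR
  have htmem : t ∈ Ico (0:ℝ) R := ⟨ht0, htR⟩
  have hvmem : v ∈ Ico (0:ℝ) R := ⟨le_trans ht0 htv.le, hvR⟩
  have hsub : Icc t v ⊆ Ico (0:ℝ) R := fun u hu => ⟨le_trans ht0 hu.1, lt_of_le_of_lt hu.2 hvR⟩
  have hψ'c : ContinuousOn ψ' (Ico (0:ℝ) R) := fun u hu =>
    (hψ2 u hu).continuousAt.continuousWithinAt
  -- the path
  set γ : ℝ → X := fun τ => x + τ • (y - x) with hγdef
  have hγmem : ∀ τ ∈ Icc (0:ℝ) 1, γ τ ∈ ball x₀ κ := by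
    intro τ hτ
    have h := (convex_ball x₀ κ) hx hy (sub_nonneg.mpr hτ.2) hτ.1 (by ring)
    have hγeq : γ τ = (1 - τ) • x + τ • y := by
      simp only [hγdef, smul_sub, sub_smul, one_smul]; abel
    rw [hγeq]; exact h
  have hγΩ : ∀ τ ∈ Icc (0:ℝ) 1, γ τ ∈ Ω := fun τ hτ => hΩκ (hγmem τ hτ)
  have hγx : ∀ τ ∈ Icc (0:ℝ) 1, ‖γ τ - x‖ = τ * ρ := by
    intro τ hτ
    simp only [hγdef, add_sub_cancel_left, norm_smul, Real.norm_eq_abs, abs_of_nonneg hτ.1,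
      ← hρdef]
  -- pointwise key estimate
  have key : ∀ τ ∈ Icc (0:ℝ) 1,
      lam * ‖f' (γ τ) (y - x) - f' x (y - x)‖ ≤
        (ψ' ((v - t) * τ + t) - ψ' t) * (ρ ^ 2 / (v - t)) := by
    intro τ hτ
    have hτρv : τ * ρ ≤ v - t :=
      calc τ * ρ ≤ 1 * ρ := mul_le_mul_of_nonneg_right hτ.2 hρ0
        _ = ρ := one_mul ρ
        _ ≤ v - t := hyx
    have h1 : lam * ‖f' (γ τ) - f' x‖ ≤ ψ' (τ * ρ + b) - ψ' b := by
      have h := hmaj x hx (γ τ) (hγmem τ hτ) (by rw [hγx τ hτ]; linarith)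
      rwa [hγx τ hτ] at h
    have hA : ‖f' (γ τ) (y - x) - f' x (y - x)‖ ≤ ‖f' (γ τ) - f' x‖ * ρ := by
      have := (f' (γ τ) - f' x).le_opNorm (y - x)
      rwa [ContinuousLinearMap.sub_apply] at this
    have h2 : lam * ‖f' (γ τ) (y - x) - f' x (y - x)‖ ≤ (ψ' (τ * ρ + b) - ψ' b) * ρ :=
      calc lam * ‖f' (γ τ) (y - x) - f' x (y - x)‖ ≤ lam * (‖f' (γ τ) - f' x‖ * ρ) :=
            mul_le_mul_of_nonneg_left hA hlam.le
        _ = lam * ‖f' (γ τ) - f' x‖ * ρ := by ring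
        _ ≤ (ψ' (τ * ρ + b) - ψ' b) * ρ := mul_le_mul_of_nonneg_right h1 hρ0
    refine h2.trans ?_
    -- membership facts
    have hm1 : b ∈ Ico (0:ℝ) R := ⟨hb0, lt_of_le_of_lt hxt htR⟩
    have hm2 : τ * ρ + b ∈ Ico (0:ℝ) R :=
      ⟨add_nonneg (mul_nonneg hτ.1 hρ0) hb0, by linarith⟩
    have hm3 : (v - t) * τ + t ∈ Ico (0:ℝ) R :=
      ⟨by linarith [mul_nonneg hd.le hτ.1],
       by linarith [mul_le_of_le_one_right hd.le hτ.2]⟩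
    by_cases hz : τ * ρ = 0
    · rw [hz, zero_add, sub_self, zero_mul]
      apply mul_nonneg
      · have h5 : ψ' t ≤ ψ' ((v - t) * τ + t) := by
          rcases eq_or_lt_of_le (show t ≤ (v - t) * τ + t by
            linarith [mul_nonneg hd.le hτ.1]) with h | h
          · rw [← h]
          · exact (h2b htmem hm3 h).le
        linarith
      · positivity
    · have hτpos : 0 < τ := by
        rcases lt_or_eq_of_le hτ.1 with h | h
        · exact h
        · exact absurd (by rw [← h, zero_mul]) hz
      have hρpos : 0 < ρ := by
        rcases lt_or_eq_of_le hρ0 with h | h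
        · exact h
        · exact absurd (by rw [← h, mul_zero]) hz
      have hτvt : τ * ρ ≤ τ * (v - t) := mul_le_mul_of_nonneg_left hyx hτ.1
      have hslope := slope_mono_gen h2a hm1 htmem hm2 hm3 hxt
        (by linarith) (by linarith [mul_pos hτpos hρpos]) (by linarith [mul_pos hd hτpos])
      rw [add_sub_cancel_right, add_sub_cancel_right] at hslope
      rw [div_le_div_iff₀ (by positivity) (by positivity)] at hslope
      -- hslope : (ψ' (τ*ρ+b) - ψ' b) * ((v-t)*τ) ≤ (ψ' ((v-t)*τ+t) - ψ' t) * (τ*ρ)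
      have heq : (ψ' ((v - t) * τ + t) - ψ' t) * (ρ ^ 2 / (v - t)) =
          (ψ' ((v - t) * τ + t) - ψ' t) * ρ ^ 2 / (v - t) := by ring
      rw [heq, le_div_iff₀ hd]
      have h3 := mul_le_mul_of_nonneg_right hslope hρ0
      have h4 : τ * ((ψ' (τ * ρ + b) - ψ' b) * ρ * (v - t)) ≤
          τ * ((ψ' ((v - t) * τ + t) - ψ' t) * ρ ^ 2) := by nlinarith [h3]
      exact le_of_mul_le_mul_left h4 hτpos
  -- interval integrability / continuity facts
  have hγcont : Continuous γ := by
    simp only [hγdef]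
    exact continuous_const.add (continuous_id.smul continuous_const)
  have hGcont : ContinuousOn (fun τ => f' (γ τ) (y - x)) (Icc (0:ℝ) 1) := by
    have h1 : ContinuousOn (fun τ => f' (γ τ)) (Icc (0:ℝ) 1) :=
      hf'c.comp hγcont.continuousOn (fun τ hτ => hγΩ τ hτ)
    exact ((ContinuousLinearMap.apply ℝ Y (y - x)).continuous).comp_continuousOn h1
  have hGint : IntervalIntegrable (fun τ => f' (γ τ) (y - x)) MeasureTheory.volume 0 1 :=
    ContinuousOn.intervalIntegrable (by rw [uIcc_of_le zero_le_one]; exact hGcont)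
  -- FTC for f along the path
  have hderiv : ∀ τ ∈ uIcc (0:ℝ) 1, HasDerivAt (fun σ => f (γ σ)) (f' (γ τ) (y - x)) τ := by
    intro τ hτ
    rw [uIcc_of_le zero_le_one] at hτ
    have hγd : HasDerivAt γ (y - x) τ := by
      have h := ((hasDerivAt_id τ).smul_const (y - x)).const_add x
      simpa [hγdef] using h
    exact (hfd (γ τ) (hγΩ τ hτ)).comp_hasDerivAt τ hγd
  have IE : ∫ τ in (0:ℝ)..1, f' (γ τ) (y - x) = f y - f x := by
    have h := intervalIntegral.integral_eq_sub_of_hasDerivAt hderiv hGint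
    have h1 : γ 1 = y := by simp only [hγdef, one_smul]; abel
    have h0 : γ 0 = x := by simp [hγdef]
    rw [h, h1, h0]
  have EI : f y - (f x + f' x (y - x)) =
      ∫ τ in (0:ℝ)..1, (f' (γ τ) (y - x) - f' x (y - x)) := by
    rw [intervalIntegral.integral_sub hGint intervalIntegrable_const, IE,
      intervalIntegral.integral_const]
    simp only [sub_zero, one_smul]
    abel
  have hN : ‖f y - (f x + f' x (y - x))‖ ≤
      ∫ τ in (0:ℝ)..1, ‖f' (γ τ) (y - x) - f' x (y - x)‖ := by
    rw [EI]
    exact intervalIntegral.norm_integral_le_integral_norm zero_le_one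
  -- continuity of both integrands
  have hLcont : ContinuousOn (fun τ => lam * ‖f' (γ τ) (y - x) - f' x (y - x)‖) (Icc (0:ℝ) 1) :=
    continuousOn_const.mul ((hGcont.sub continuousOn_const).norm)
  have haffc : ContinuousOn (fun τ : ℝ => ψ' ((v - t) * τ + t)) (Icc (0:ℝ) 1) := by
    apply hψ'c.comp
      (Continuous.continuousOn ((continuous_const.mul continuous_id).add continuous_const))
    intro τ hτ
    show (v - t) * τ + t ∈ Ico (0:ℝ) R
    exact ⟨by linarith [mul_nonneg hd.le hτ.1],
      by linarith [mul_le_of_le_one_right hd.le hτ.2]⟩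
  have hRcont : ContinuousOn (fun τ : ℝ => (ψ' ((v - t) * τ + t) - ψ' t) * (ρ ^ 2 / (v - t)))
      (Icc (0:ℝ) 1) := (haffc.sub continuousOn_const).mul continuousOn_const
  have hLint : IntervalIntegrable (fun τ => lam * ‖f' (γ τ) (y - x) - f' x (y - x)‖)
      MeasureTheory.volume 0 1 :=
    ContinuousOn.intervalIntegrable (by rw [uIcc_of_le zero_le_one]; exact hLcont)
  have hRint : IntervalIntegrable (fun τ : ℝ => (ψ' ((v - t) * τ + t) - ψ' t) * (ρ ^ 2 / (v - t)))
      MeasureTheory.volume 0 1 :=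
    ContinuousOn.intervalIntegrable (by rw [uIcc_of_le zero_le_one]; exact hRcont)
  have haffint : IntervalIntegrable (fun τ : ℝ => ψ' ((v - t) * τ + t))
      MeasureTheory.volume 0 1 :=
    ContinuousOn.intervalIntegrable (by rw [uIcc_of_le zero_le_one]; exact haffc)
  -- FTC for ψ
  have I1 : ∫ u in t..v, ψ' u = ψ v - ψ t := by
    apply intervalIntegral.integral_eq_sub_of_hasDerivAt
    · intro u hu
      rw [uIcc_of_le htv.le] at hu
      exact hψ1 u (hsub hu)
    · exact ContinuousOn.intervalIntegrable
        (by rw [uIcc_of_le htv.le]; exact hψ'c.mono hsub)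
  have I2 : ∫ τ in (0:ℝ)..1, ψ' ((v - t) * τ + t) = (v - t)⁻¹ * (ψ v - ψ t) := by
    rw [intervalIntegral.integral_comp_mul_add ψ' (ne_of_gt hd) t]
    rw [mul_zero, zero_add, mul_one, sub_add_cancel, I1, smul_eq_mul]
  have J : ∫ τ in (0:ℝ)..1, (ψ' ((v - t) * τ + t) - ψ' t) =
      (v - t)⁻¹ * (ψ v - ψ t) - ψ' t := by
    rw [intervalIntegral.integral_sub haffint intervalIntegrable_const, I2,
      intervalIntegral.integral_const]
    simp
  -- first inequality
  have first : lam * ‖f y - (f x + f' x (y - x))‖ ≤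
      (ψ v - (ψ t + ψ' t * (v - t))) * (ρ ^ 2 / (v - t) ^ 2) := by
    have step1 : lam * ‖f y - (f x + f' x (y - x))‖ ≤
        ∫ τ in (0:ℝ)..1, lam * ‖f' (γ τ) (y - x) - f' x (y - x)‖ := by
      rw [intervalIntegral.integral_const_mul]
      exact mul_le_mul_of_nonneg_left hN hlam.le
    have step2 : (∫ τ in (0:ℝ)..1, lam * ‖f' (γ τ) (y - x) - f' x (y - x)‖) ≤
        ∫ τ in (0:ℝ)..1, (ψ' ((v - t) * τ + t) - ψ' t) * (ρ ^ 2 / (v - t)) :=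
      intervalIntegral.integral_mono_on zero_le_one hLint hRint key
    have step3 : (∫ τ in (0:ℝ)..1, (ψ' ((v - t) * τ + t) - ψ' t) * (ρ ^ 2 / (v - t))) =
        (ψ v - (ψ t + ψ' t * (v - t))) * (ρ ^ 2 / (v - t) ^ 2) := by
      rw [intervalIntegral.integral_mul_const, J]
      field_simp
      ring
    calc lam * ‖f y - (f x + f' x (y - x))‖ ≤ _ := step1
      _ ≤ _ := step2
      _ = _ := step3
  refine ⟨first, ?_⟩
  -- second inequality
  have hint_left : IntervalIntegrable (fun u => ψ' u - ψ' t) MeasureTheory.volume t v :=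
    ContinuousOn.intervalIntegrable
      (by rw [uIcc_of_le htv.le]; exact (hψ'c.mono hsub).sub continuousOn_const)
  have Ie : ψ v - (ψ t + ψ' t * (v - t)) = ∫ u in t..v, (ψ' u - ψ' t) := by
    rw [intervalIntegral.integral_sub
      (ContinuousOn.intervalIntegrable (by rw [uIcc_of_le htv.le]; exact hψ'c.mono hsub))
      intervalIntegrable_const, I1, intervalIntegral.integral_const, smul_eq_mul]
    ring
  have he0 : 0 ≤ ψ v - (ψ t + ψ' t * (v - t)) := by
    rw [Ie]
    apply intervalIntegral.integral_nonneg htv.le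
    intro u hu
    rcases eq_or_lt_of_le hu.1 with h | h
    · rw [← h]; simp
    · have := (h2b htmem (hsub hu) h).le
      linarith
  have hratio : ρ ^ 2 / (v - t) ^ 2 ≤ 1 := by
    rw [div_le_one (by positivity)]
    exact pow_le_pow_left₀ hρ0 hyx 2
  -- pointwise bound ψ' u - ψ' t ≤ ψ'' v * (u - t)
  have hD : ∀ u ∈ Icc t v, ψ' u - ψ' t ≤ ψ'' v * (u - t) := by
    intro u hu
    rcases eq_or_lt_of_le hu.1 with h | h
    · rw [← h]; simp
    · have hslope : (ψ' u - ψ' t) / (u - t) ≤ ψ'' v := by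
        have htend : Tendsto (slope ψ' v) (𝓝[<] v) (𝓝 (ψ'' v)) :=
          (hasDerivAt_iff_tendsto_slope.mp (hψ2 v hvmem)).mono_left
            (nhdsWithin_mono v (fun w hw => ne_of_lt hw))
        refine ge_of_tendsto htend ?_
        filter_upwards [Ioo_mem_nhdsLT_of_mem (⟨htv, le_refl v⟩ : v ∈ Ioc t v)] with w hw
        have hsl := slope_mono_gen h2a htmem (hsub ⟨hw.1.le, hw.2.le⟩) (hsub hu) hvmem
          hw.1.le hu.2 h hw.2
        rw [slope_def_field]
        have e1 : (ψ' w - ψ' v) / (w - v) = (ψ' v - ψ' w) / (v - w) := by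
          rw [← neg_div_neg_eq]; ring_nf
        rw [e1]
        exact hsl
      rw [div_le_iff₀ (sub_pos.mpr h)] at hslope
      linarith
  have hint_right : IntervalIntegrable (fun u => ψ'' v * (u - t)) MeasureTheory.volume t v :=
    (Continuous.intervalIntegrable (continuous_const.mul (continuous_id.sub continuous_const)) t v)
  have hmono2 := intervalIntegral.integral_mono_on htv.le hint_left hint_right hD
  have Icalc : ∫ u in t..v, ψ'' v * (u - t) = ψ'' v * ((v - t) ^ 2 / 2) := by
    rw [intervalIntegral.integral_const_mul]
    congr 1
    rw [show (fun u : ℝ => u - t) = (fun u : ℝ => id (u - t)) from rfl,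
      intervalIntegral.integral_comp_sub_right (id : ℝ → ℝ) t]
    simp only [id_eq, sub_self]
    rw [integral_id]
    ring
  calc (ψ v - (ψ t + ψ' t * (v - t))) * (ρ ^ 2 / (v - t) ^ 2) ≤
      (ψ v - (ψ t + ψ' t * (v - t))) * 1 := mul_le_mul_of_nonneg_left hratio he0
    _ = ψ v - (ψ t + ψ' t * (v - t)) := mul_one _
    _ ≤ ψ'' v * ((v - t) ^ 2 / 2) := by rw [Ie]; rw [Icalc] at hmono2; exact hmono2
    _ = 1 / 2 * ψ'' v * (v - t) ^ 2 := by ring
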